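/- arXiv:1912.00851 — 5 statements merged into one kernel-verified Lean document; each statement's English description precedes it below -/
import Mathlib

section
/- Let p be a prime and n a positive integer with gcd(n, p(p−1)) = 1 such that n has no divisor d ≠ 1 with d ≡ 1 (mod p). Then every finite group H of order np is the direct product of a group of order n and a group of order p; more precisely, H has a unique Sylow p-subgroup P, P is cyclic of order p and contained in the center of H, and there exists a normal subgroup K of H of order n with H isomorphic to K × P. -/
/-- Let `p` be a prime and `n` a positive integer with `gcd(n, p(p-1)) = 1` such that
`n` has no divisor `d ≠ 1` with `d ≡ 1 (mod p)`. Then every finite group `H` of order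
`n * p` has a unique Sylow `p`-subgroup `P`, which is cyclic of order `p` and central,
and `H` is the direct product of a normal subgroup `K` of order `n` with `P`. -/
theorem group_order_np_direct_product
    (p n : ℕ) (hp : p.Prime) (hn : 0 < n)
    (hgcd : Nat.gcd n (p * (p - 1)) = 1)
    (hdiv : ∀ d : ℕ, d ∣ n → d ≠ 1 → ¬ (d ≡ 1 [MOD p]))
    (H : Type*) [Group H] [Finite H] (hcard : Nat.card H = n * p) :
    ∃ P : Subgroup H,
      Nat.card P = p ∧ IsCyclic P ∧ P ≤ Subgroup.center H ∧
      (∀ Q : Sylow p H, (Q : Subgroup H) = P) ∧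
      ∃ K : Subgroup H, K.Normal ∧ Nat.card K = n ∧ Nonempty (H ≃* K × P) := by
  have hp' : Fact p.Prime := ⟨hp⟩
  have hcop : Nat.Coprime n (p * (p - 1)) := hgcd
  have hnp : Nat.Coprime n p := hcop.coprime_dvd_right (dvd_mul_right _ _)
  have hnp1 : Nat.Coprime n (p - 1) := hcop.coprime_dvd_right (dvd_mul_left _ _)
  have hpp1 : Nat.Coprime p (p - 1) := by
    rcases Nat.eq_or_lt_of_le hp.two_le with h | h
    · simp [← h]
    · exact hp.coprime_iff_not_dvd.mpr (Nat.not_dvd_of_pos_of_lt (by omega) (by omega))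
  obtain ⟨P⟩ : Nonempty (Sylow p H) := inferInstance
  -- card of P
  have hcardP : Nat.card P = p := by
    have hpd : ¬ p ∣ n := (Nat.Prime.coprime_iff_not_dvd hp).mp hnp.symm
    rw [P.card_eq_multiplicity, hcard, Nat.factorization_mul hn.ne' hp.pos.ne',
      Finsupp.add_apply, Nat.Prime.factorization_self hp,
      Nat.factorization_eq_zero_of_not_dvd hpd]
    norm_num
  -- index of P
  have hindex : (P : Subgroup H).index = n := by
    have := Subgroup.card_mul_index (P : Subgroup H)
    rw [hcardP, hcard] at this
    exact Nat.eq_of_mul_eq_mul_left hp.pos (by rw [mul_comm n p] at this; linarith)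
  -- number of Sylow subgroups is 1
  have hsyl1 : Nat.card (Sylow p H) = 1 := by
    by_contra hne
    exact hdiv _ (hindex ▸ P.card_dvd_index) hne (card_sylow_modEq_one p H)
  have hsub : Subsingleton (Sylow p H) := (Nat.card_eq_one_iff_unique.mp hsyl1).1
  have hQ : ∀ Q : Sylow p H, (Q : Subgroup H) = P := fun Q => congrArg _ (hsub.elim Q P)
  -- P is normal
  have hnormal : (P : Subgroup H).Normal := by
    rw [← Subgroup.normalizer_eq_top_iff]
    ext g
    simp only [Subgroup.mem_top, iff_true]
    refine Sylow.smul_eq_iff_mem_normalizer.mp ?_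
    exact hsub.elim _ _
  -- P is cyclic
  have hcyc : IsCyclic (P : Subgroup H) := by
    have : Fact (Nat.card (P : Subgroup H) = p) := ⟨hcardP⟩
    exact isCyclic_of_prime_card hcardP
  -- P central
  have hcentral : (P : Subgroup H) ≤ Subgroup.center H := by
    intro x hx
    rw [Subgroup.mem_center_iff]
    intro g
    have hAut : Nat.card (MulAut (P : Subgroup H)) = p - 1 := by
      rw [IsCyclic.card_mulAut, hcardP, Nat.totient_prime hp]
    have h1 : orderOf (MulAut.conjNormal g : MulAut (P : Subgroup H)) ∣ n * p :=
      hcard ▸ (orderOf_map_dvd _ _).trans (orderOf_dvd_natCard g)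
    have h2 : orderOf (MulAut.conjNormal g : MulAut (P : Subgroup H)) ∣ p - 1 :=
      hAut ▸ orderOf_dvd_natCard _
    have hco : Nat.Coprime (n * p) (p - 1) := Nat.Coprime.mul hnp1 hpp1
    have : orderOf (MulAut.conjNormal g : MulAut (P : Subgroup H)) = 1 :=
      Nat.eq_one_of_dvd_coprimes hco h1 h2
    have htriv : (MulAut.conjNormal g : MulAut (P : Subgroup H)) = 1 := orderOf_eq_one_iff.mp this
    have := MulAut.conjNormal_apply g ⟨x, hx⟩
    rw [htriv] at this
    simp only [MulAut.one_apply] at this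
    rw [eq_comm, mul_inv_eq_iff_eq_mul] at this
    exact this
  -- Schur-Zassenhaus
  obtain ⟨K, hK⟩ := Subgroup.exists_left_complement'_of_coprime
    (N := (P : Subgroup H)) (by rw [hcardP, hindex]; exact hnp.symm)
  have hcardK : Nat.card K = n := by
    have := hK.card_mul
    rw [hcardP, hcard] at this
    exact Nat.eq_of_mul_eq_mul_right hp.pos this
  have hKnormal : K.Normal := by
    constructor
    intro k hk g
    obtain ⟨⟨⟨k', hk'⟩, ⟨z, hz⟩⟩, hkz, -⟩ := hK.existsUnique g
    simp only at hkz
    have hzc : ∀ w : H, z * w = w * z := fun w =>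
      (Subgroup.mem_center_iff.mp (hcentral hz) w).symm
    have hg : g = k' * z := hkz.symm
    have : g * k * g⁻¹ = k' * k * k'⁻¹ := by
      rw [hg]
      calc k' * z * k * (k' * z)⁻¹ = k' * (z * k * z⁻¹) * k'⁻¹ := by
            rw [mul_inv_rev]; group
        _ = k' * (k * z * z⁻¹) * k'⁻¹ := by rw [hzc k]
        _ = k' * k * k'⁻¹ := by group
    rw [this]
    exact K.mul_mem (K.mul_mem hk' hk) (K.inv_mem hk')
  -- direct product
  have hcomm : ∀ (k : K) (z : (P : Subgroup H)),
      Commute (K.subtype k) ((P : Subgroup H).subtype z) := by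
    intro k z
    exact (Subgroup.mem_center_iff.mp (hcentral z.2) _)
  let f : K × (P : Subgroup H) →* H := MonoidHom.noncommCoprod K.subtype (P : Subgroup H).subtype hcomm
  have hinj : Function.Injective f := by
    rw [injective_iff_map_eq_one]
    rintro ⟨k, z⟩ h1
    simp only [f, MonoidHom.noncommCoprod_apply, Subgroup.coe_subtype] at h1
    have hk : (k : H) = (z : H)⁻¹ := eq_inv_of_mul_eq_one_left h1
    have : (k : H) ∈ K ⊓ (P : Subgroup H) := ⟨k.2, hk ▸ (P : Subgroup H).inv_mem z.2⟩
    rw [hK.disjoint.eq_bot, Subgroup.mem_bot] at this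
    have hk1 : (k : H) = 1 := this
    have hz1 : (z : H) = 1 := by rw [hk1, eq_comm, inv_eq_one] at hk; exact hk
    exact Prod.ext (Subtype.ext hk1) (Subtype.ext hz1)
  have hsurj : Function.Surjective f := by
    intro g
    obtain ⟨⟨k, z⟩, hkz, -⟩ := hK.existsUnique g
    exact ⟨(k, z), hkz⟩
  exact ⟨P, hcardP, hcyc, hcentral, hQ,
    K, hKnormal, hcardK, ⟨(MulEquiv.ofBijective f ⟨hinj, hsurj⟩).symm⟩⟩
end

section
/- Let G be a finitely generated group and for m ∈ ℕ let f(m) denote the number of normal subgroups of G of index m. Let n be a positive integer and p a prime with gcd(n, p(p−1)) = 1 such that n has no divisor d ≠ 1 with d ≡ 1 (mod p). Then f(np) = f(n)·f(p). -/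
/-- The number of normal subgroups of `G` of index `n`. -/
noncomputable def normalCount (G : Type*) [Group G] (n : ℕ) : ℕ :=
  Nat.card {N : Subgroup G // N.Normal ∧ N.index = n}

section Aux

variable {n p : ℕ}

/-- In a group of order `n * p`, with the divisibility hypotheses, any two subgroups of
cardinality `p` coincide (they are the unique Sylow `p`-subgroup). -/
private lemma aux_unique_p {Q : Type*} [Group Q] (hn : 0 < n) (hp : p.Prime)
    (hpn : ¬ p ∣ n) (hQ : Nat.card Q = n * p)
    (hdiv : ∀ d : ℕ, d ∣ n → d ≠ 1 → ¬ (d ≡ 1 [MOD p]))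
    (S T : Subgroup Q) (hS : Nat.card S = p) (hT : Nat.card T = p) : S = T := by
  haveI : Fact p.Prime := ⟨hp⟩
  haveI : Finite Q := Nat.finite_of_card_ne_zero
    (by rw [hQ]; exact Nat.mul_ne_zero hn.ne' hp.pos.ne')
  -- the p-adic valuation of |Q| is 1
  have hfact : (Nat.card Q).factorization p = 1 := by
    rw [hQ, Nat.factorization_mul hn.ne' hp.pos.ne']
    simp [Nat.factorization_eq_zero_of_not_dvd hpn, hp.factorization_self]
  have hcardSyl : ∀ P : Sylow p Q, Nat.card (P : Subgroup Q) = p := by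
    intro P
    rw [Sylow.card_eq_multiplicity, hfact, pow_one]
  -- there is a unique Sylow p-subgroup
  have hone : Nat.card (Sylow p Q) = 1 := by
    obtain ⟨P⟩ := (inferInstance : Nonempty (Sylow p Q))
    have hidx : (P : Subgroup Q).index = n := by
      have h := Subgroup.card_mul_index (P : Subgroup Q)
      rw [hcardSyl P, hQ, mul_comm n p] at h
      exact Nat.eq_of_mul_eq_mul_left hp.pos h
    have hdvd : Nat.card (Sylow p Q) ∣ n := hidx ▸ Sylow.card_dvd_index P
    have hmod : Nat.card (Sylow p Q) ≡ 1 [MOD p] := card_sylow_modEq_one p Q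
    by_contra hne
    exact hdiv _ hdvd hne hmod
  haveI hsub : Subsingleton (Sylow p Q) :=
    (Nat.card_eq_one_iff_unique.mp hone).1
  obtain ⟨P₁, hP₁⟩ := (IsPGroup.of_card (by rw [hS, pow_one]) :
    IsPGroup p S).exists_le_sylow
  obtain ⟨P₂, hP₂⟩ := (IsPGroup.of_card (by rw [hT, pow_one]) :
    IsPGroup p T).exists_le_sylow
  have h1 : S = (P₁ : Subgroup Q) :=
    Subgroup.eq_of_le_of_card_ge hP₁ (by rw [hS, hcardSyl])
  have h2 : T = (P₂ : Subgroup Q) :=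
    Subgroup.eq_of_le_of_card_ge hP₂ (by rw [hT, hcardSyl])
  rw [h1, h2, Subsingleton.elim P₁ P₂]

/-- In a group of order `n * p` with `gcd(n,p) = 1`, any subgroup of cardinality `n` is
contained in any normal subgroup of cardinality `n`. -/
private lemma aux_le_n {Q : Type*} [Group Q] (hn : 0 < n)
    (hco : Nat.Coprime n p) (hQ : Nat.card Q = n * p)
    (S T : Subgroup Q) (hTn : T.Normal) (hS : Nat.card S = n) (hT : Nat.card T = n) :
    S ≤ T := by
  haveI := hTn
  have hidx : T.index = p := by
    have h := Subgroup.card_mul_index T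
    rw [hT, hQ] at h
    exact Nat.eq_of_mul_eq_mul_left hn h
  have hcardQT : Nat.card (Q ⧸ T) = p := by rw [← Subgroup.index_eq_card, hidx]
  intro s hs
  have h1 : orderOf ((QuotientGroup.mk' T) s) ∣ n :=
    (orderOf_map_dvd _ s).trans (hS ▸ Subgroup.orderOf_dvd_natCard S hs)
  have h2 : orderOf ((QuotientGroup.mk' T) s) ∣ p :=
    hcardQT ▸ orderOf_dvd_natCard _
  have h3 : orderOf ((QuotientGroup.mk' T) s) = 1 :=
    Nat.dvd_one.mp (hco ▸ Nat.dvd_gcd h1 h2)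
  have h4 : (QuotientGroup.mk' T) s = 1 := orderOf_eq_one_iff.mp h3
  rwa [← QuotientGroup.ker_mk' T, MonoidHom.mem_ker]

/-- Existence of the decomposition: in a group of order `n * p` with our hypotheses there
are normal subgroups of orders `p` and `n` intersecting trivially. -/
private lemma aux_exists {Q : Type*} [Group Q] (hn : 0 < n) (hp : p.Prime)
    (hpn : ¬ p ∣ n) (hco : Nat.Coprime n p) (hco2 : Nat.Coprime (n * p) (p - 1))
    (hQ : Nat.card Q = n * p)
    (hdiv : ∀ d : ℕ, d ∣ n → d ≠ 1 → ¬ (d ≡ 1 [MOD p])) :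
    ∃ P H : Subgroup Q, P.Normal ∧ H.Normal ∧
      Nat.card P = p ∧ Nat.card H = n ∧ P ⊓ H = ⊥ := by
  haveI : Fact p.Prime := ⟨hp⟩
  haveI : Finite Q := Nat.finite_of_card_ne_zero
    (by rw [hQ]; exact Nat.mul_ne_zero hn.ne' hp.pos.ne')
  have hfact : (Nat.card Q).factorization p = 1 := by
    rw [hQ, Nat.factorization_mul hn.ne' hp.pos.ne']
    simp [Nat.factorization_eq_zero_of_not_dvd hpn, hp.factorization_self]
  obtain ⟨P₀⟩ := (inferInstance : Nonempty (Sylow p Q))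
  have hcardP : Nat.card (P₀ : Subgroup Q) = p := by
    rw [Sylow.card_eq_multiplicity, hfact, pow_one]
  -- P₀ is normal
  haveI hPnorm : (P₀ : Subgroup Q).Normal := by
    constructor
    intro x hx g
    have hmap : Subgroup.map (MulAut.conj g).toMonoidHom (P₀ : Subgroup Q)
        = (P₀ : Subgroup Q) := by
      refine aux_unique_p hn hp hpn hQ hdiv _ _ ?_ hcardP
      exact (Nat.card_congr
        (((P₀ : Subgroup Q).equivMapOfInjective _
          (MulAut.conj g).injective).toEquiv).symm).trans hcardP
    rw [← hmap]
    exact ⟨x, hx, rfl⟩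
  -- every element of P₀ is central
  have hcomm : ∀ x ∈ (P₀ : Subgroup Q), ∀ z : Q, z * x = x * z := by
    intro x hx z
    have hcyc : IsCyclic (P₀ : Subgroup Q) := isCyclic_of_prime_card hcardP
    have hAut : Nat.card (MulAut (P₀ : Subgroup Q)) = p - 1 := by
      rw [IsCyclic.card_mulAut, hcardP, Nat.totient_prime hp]
    have h1 : orderOf (MulAut.conjNormal z : MulAut (P₀ : Subgroup Q)) ∣ p - 1 :=
      hAut ▸ orderOf_dvd_natCard _
    have h2 : orderOf (MulAut.conjNormal z : MulAut (P₀ : Subgroup Q)) ∣ n * p :=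
      hQ ▸ (orderOf_map_dvd _ z).trans (orderOf_dvd_natCard z)
    have h3 : orderOf (MulAut.conjNormal z : MulAut (P₀ : Subgroup Q)) = 1 :=
      Nat.dvd_one.mp (hco2 ▸ Nat.dvd_gcd h2 h1)
    have h4 : (MulAut.conjNormal z : MulAut (P₀ : Subgroup Q)) = 1 :=
      orderOf_eq_one_iff.mp h3
    have h5 := MulAut.conjNormal_apply z (⟨x, hx⟩ : (P₀ : Subgroup Q))
    rw [h4] at h5
    simp only [MulAut.one_apply] at h5
    have h6 : z * x * z⁻¹ = x := h5.symm
    rwa [mul_inv_eq_iff_eq_mul] at h6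
  -- Schur–Zassenhaus complement
  have hcopr : Nat.Coprime (Nat.card (P₀ : Subgroup Q)) (P₀ : Subgroup Q).index := by
    have hidx : (P₀ : Subgroup Q).index = n := by
      have h := Subgroup.card_mul_index (P₀ : Subgroup Q)
      rw [hcardP, hQ, mul_comm n p] at h
      exact Nat.eq_of_mul_eq_mul_left hp.pos h
    rw [hcardP, hidx]
    exact hco.symm
  obtain ⟨H, hc⟩ := Subgroup.exists_right_complement'_of_coprime hcopr
  have hcardH : Nat.card H = n := by
    have h := hc.card_mul
    rw [hcardP, hQ, mul_comm n p] at h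
    exact Nat.eq_of_mul_eq_mul_left hp.pos h
  have hHnorm : H.Normal := by
    constructor
    intro h hh g
    obtain ⟨⟨⟨x, hxP⟩, ⟨y, hyH⟩⟩, hxy, -⟩ := hc.existsUnique g
    simp only at hxy
    have hyhy : y * h * y⁻¹ ∈ H := H.mul_mem (H.mul_mem hyH hh) (H.inv_mem hyH)
    have hgx : g * h * g⁻¹ = x * (y * h * y⁻¹) * x⁻¹ := by rw [← hxy]; group
    have hstep : x * (y * h * y⁻¹) * x⁻¹ = y * h * y⁻¹ := by
      rw [show x * (y * h * y⁻¹) = (y * h * y⁻¹) * x from (hcomm x hxP _).symm,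
        mul_inv_cancel_right]
    rw [hgx, hstep]
    exact hyhy
  exact ⟨P₀, H, hPnorm, hHnorm, hcardP, hcardH, disjoint_iff.mp hc.disjoint⟩

end Aux

/-- Let `G` be a finitely generated group, `n` a positive integer and `p` a prime with
`gcd(n, p(p-1)) = 1` such that `n` has no divisor `d ≠ 1` with `d ≡ 1 (mod p)`. Then
the number of normal subgroups of index `n * p` equals the product of the numbers of
normal subgroups of index `n` and of index `p`. -/
theorem normalCount_mul_prime
    (G : Type*) [Group G] (hFG : Group.FG G)
    (n p : ℕ) (hn : 0 < n) (hp : p.Prime)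
    (hgcd : Nat.gcd n (p * (p - 1)) = 1)
    (hdiv : ∀ d : ℕ, d ∣ n → d ≠ 1 → ¬ (d ≡ 1 [MOD p])) :
    normalCount G (n * p) = normalCount G n * normalCount G p := by
  classical
  have hpn : ¬ p ∣ n := by
    intro h
    have h2 : p ∣ Nat.gcd n (p * (p - 1)) := Nat.dvd_gcd h (dvd_mul_right _ _)
    rw [hgcd] at h2
    exact hp.one_lt.ne' (Nat.dvd_one.mp h2)
  have hco : Nat.Coprime n p := Nat.Coprime.coprime_dvd_right (dvd_mul_right p (p - 1)) hgcd
  have hco1 : Nat.Coprime n (p - 1) :=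
    Nat.Coprime.coprime_dvd_right (dvd_mul_left (p - 1) p) hgcd
  have hcp : Nat.Coprime p (p - 1) :=
    (Nat.Prime.coprime_iff_not_dvd hp).mpr fun h =>
      absurd (Nat.le_of_dvd (by have := hp.two_le; omega) h) (by have := hp.two_le; omega)
  have hco2 : Nat.Coprime (n * p) (p - 1) := Nat.Coprime.mul hco1 hcp
  -- the index of the intersection of normal subgroups of index n and p
  have hinf : ∀ A B : Subgroup G, A.index = n → B.index = p → (A ⊓ B).index = n * p := by
    intro A B hA hB
    have hd : n * p ∣ (A ⊓ B).index :=
      Nat.Coprime.mul_dvd_of_dvd_of_dvd hco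
        (hA ▸ Subgroup.index_dvd_of_le inf_le_left)
        (hB ▸ Subgroup.index_dvd_of_le inf_le_right)
    have hle : (A ⊓ B).index ≤ n * p := by
      calc (A ⊓ B).index ≤ A.index * B.index := Subgroup.index_inf_le
        _ = n * p := by rw [hA, hB]
    have hne : (A ⊓ B).index ≠ 0 :=
      Subgroup.index_inf_ne_zero (by rw [hA]; exact hn.ne') (by rw [hB]; exact hp.pos.ne')
    exact Nat.le_antisymm hle (Nat.le_of_dvd (Nat.pos_of_ne_zero hne) hd)
  -- the map sending a pair to the intersection
  let b : {A : Subgroup G // A.Normal ∧ A.index = n} ×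
      {B : Subgroup G // B.Normal ∧ B.index = p} →
      {N : Subgroup G // N.Normal ∧ N.index = n * p} :=
    fun AB => ⟨AB.1.1 ⊓ AB.2.1,
      by haveI := AB.1.2.1; haveI := AB.2.2.1; exact Subgroup.normal_inf_normal _ _,
      hinf _ _ AB.1.2.2 AB.2.2.2⟩
  have hbij : Function.Bijective b := by
    constructor
    · -- injectivity
      rintro ⟨⟨A, hAn, hAi⟩, ⟨B, hBn, hBi⟩⟩ ⟨⟨A', hAn', hAi'⟩, ⟨B', hBn', hBi'⟩⟩ heq
      simp only [b, Subtype.mk.injEq] at heq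
      set N : Subgroup G := A ⊓ B with hNdef
      haveI hNn : N.Normal := by haveI := hAn; haveI := hBn; exact Subgroup.normal_inf_normal _ _
      have hNidx : N.index = n * p := hinf A B hAi hBi
      have hcardQ : Nat.card (G ⧸ N) = n * p := by rw [← Subgroup.index_eq_card, hNidx]
      set π : G →* G ⧸ N := QuotientGroup.mk' N with hπ
      have hπs : Function.Surjective π := QuotientGroup.mk'_surjective N
      -- general facts about the images
      have key : ∀ X : Subgroup G, N ≤ X →
          (Subgroup.comap π (Subgroup.map π X) = X ∧
            Nat.card (Subgroup.map π X) * X.index = n * p) := by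
        intro X hX
        have hker : π.ker ≤ X := by rw [hπ, QuotientGroup.ker_mk']; exact hX
        have hcm : Subgroup.comap π (Subgroup.map π X) = X :=
          Subgroup.comap_map_eq_self hker
        refine ⟨hcm, ?_⟩
        have hidx : (Subgroup.map π X).index = X.index := by
          conv_rhs => rw [← hcm]
          rw [Subgroup.index_comap_of_surjective _ hπs]
        have h := Subgroup.card_mul_index (Subgroup.map π X)
        rwa [hidx, hcardQ] at h
      have hNA : N ≤ A := inf_le_left
      have hNB : N ≤ B := inf_le_right
      have hNA' : N ≤ A' := heq ▸ inf_le_left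
      have hNB' : N ≤ B' := heq ▸ inf_le_right
      obtain ⟨hcmA, hcA⟩ := key A hNA
      obtain ⟨hcmB, hcB⟩ := key B hNB
      obtain ⟨hcmA', hcA'⟩ := key A' hNA'
      obtain ⟨hcmB', hcB'⟩ := key B' hNB'
      rw [hAi] at hcA
      rw [hBi] at hcB
      rw [hAi'] at hcA'
      rw [hBi'] at hcB'
      -- cards of the images
      have hcardA : Nat.card (Subgroup.map π A) = p := by
        have := hcA.trans (mul_comm n p)
        exact Nat.eq_of_mul_eq_mul_right hn this
      have hcardA' : Nat.card (Subgroup.map π A') = p := by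
        have := hcA'.trans (mul_comm n p)
        exact Nat.eq_of_mul_eq_mul_right hn this
      have hcardB : Nat.card (Subgroup.map π B) = n := by
        exact Nat.eq_of_mul_eq_mul_right hp.pos hcB
      have hcardB' : Nat.card (Subgroup.map π B') = n := by
        exact Nat.eq_of_mul_eq_mul_right hp.pos hcB'
      haveI : Finite (G ⧸ N) := Nat.finite_of_card_ne_zero
        (by rw [hcardQ]; exact Nat.mul_ne_zero hn.ne' hp.pos.ne')
      -- uniqueness of the order-p subgroup
      have hA_eq : Subgroup.map π A = Subgroup.map π A' :=
        aux_unique_p hn hp hpn hcardQ hdiv _ _ hcardA hcardA'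
      -- uniqueness of the order-n subgroup
      have hBnorm : (Subgroup.map π B).Normal := hBn.map π hπs
      have hBnorm' : (Subgroup.map π B').Normal := hBn'.map π hπs
      have hB_le : Subgroup.map π B ≤ Subgroup.map π B' :=
        aux_le_n hn hco hcardQ _ _ hBnorm' hcardB hcardB'
      have hB_eq : Subgroup.map π B = Subgroup.map π B' :=
        Subgroup.eq_of_le_of_card_ge hB_le (by rw [hcardB, hcardB'])
      have : A = A' := by rw [← hcmA, ← hcmA', hA_eq]
      have hBB : B = B' := by rw [← hcmB, ← hcmB', hB_eq]
      subst this; subst hBB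
      rfl
    · -- surjectivity
      rintro ⟨N, hNn, hNi⟩
      haveI := hNn
      have hcardQ : Nat.card (G ⧸ N) = n * p := by rw [← Subgroup.index_eq_card, hNi]
      obtain ⟨P, H, hPn, hHn, hPc, hHc, hPH⟩ :=
        aux_exists hn hp hpn hco hco2 hcardQ hdiv
      set π : G →* G ⧸ N := QuotientGroup.mk' N with hπ
      have hπs : Function.Surjective π := QuotientGroup.mk'_surjective N
      have hPidx : P.index = n := by
        have h := Subgroup.card_mul_index P
        rw [hPc, hcardQ, mul_comm n p] at h
        exact Nat.eq_of_mul_eq_mul_left hp.pos h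
      have hHidx : H.index = p := by
        have h := Subgroup.card_mul_index H
        rw [hHc, hcardQ] at h
        exact Nat.eq_of_mul_eq_mul_left hn h
      refine ⟨⟨⟨Subgroup.comap π P, hPn.comap π, ?_⟩,
        ⟨Subgroup.comap π H, hHn.comap π, ?_⟩⟩, ?_⟩
      · rw [Subgroup.index_comap_of_surjective _ hπs, hPidx]
      · rw [Subgroup.index_comap_of_surjective _ hπs, hHidx]
      · apply Subtype.ext
        show Subgroup.comap π P ⊓ Subgroup.comap π H = N
        rw [← Subgroup.comap_inf, hPH, MonoidHom.comap_bot, hπ, QuotientGroup.ker_mk']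
  calc normalCount G (n * p)
      = Nat.card ({A : Subgroup G // A.Normal ∧ A.index = n} ×
        {B : Subgroup G // B.Normal ∧ B.index = p}) :=
        Nat.card_congr (Equiv.ofBijective b hbij).symm
    _ = normalCount G n * normalCount G p := Nat.card_prod _ _
end

section
/- There is an absolute constant C such that for all x ≥ 16 and all integers q with x^{1/4} ≤ q ≤ √x, the number of integers n ≤ x with P⁺(n) > √x, q | n, and q | P⁺(n) − 1 is at most C·x·(log x)/q². -/
/-- `P⁺(n)`, the largest prime divisor of `n ≥ 2`, with `P⁺(1) = 1` (and `P⁺(0) = 0`). -/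
def Pplus (n : ℕ) : ℕ :=
  if n ≤ 1 then n else n.primeFactors.sup id

lemma Pplus_mem (n : ℕ) (hn : 2 ≤ n) : Pplus n ∈ n.primeFactors := by
  have hne : n.primeFactors.Nonempty := Nat.nonempty_primeFactors.mpr hn
  obtain ⟨b, hb, hsup⟩ := Finset.exists_mem_eq_sup _ hne id
  simpa [Pplus, show ¬ n ≤ 1 by omega, hsup] using hb

/-- There is an absolute constant `C` such that for all `x ≥ 16` and all integers `q`
with `x^(1/4) ≤ q ≤ √x`, the number of integers `n ≤ x` with `P⁺(n) > √x`, `q ∣ n` and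
`q ∣ P⁺(n) - 1` is at most `C x log x / q²`. -/
theorem count_large_modulus_bound :
    ∃ C : ℝ, ∀ x : ℝ, 16 ≤ x → ∀ q : ℕ,
      x ^ ((1 : ℝ) / 4) ≤ (q : ℝ) → (q : ℝ) ≤ Real.sqrt x →
      (({n : ℕ | 0 < n ∧ (n : ℝ) ≤ x ∧ Real.sqrt x < (Pplus n : ℝ) ∧
          q ∣ n ∧ q ∣ (Pplus n - 1)} : Set ℕ).ncard : ℝ) ≤
        C * x * Real.log x / (q : ℝ) ^ 2 := by
  use 2
  intro x hx q hq1 hq2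
  have hx0 : (0:ℝ) < x := by linarith
  set N := ⌊x⌋₊ with hNdef
  have hxN : (N:ℝ) ≤ x := Nat.floor_le hx0.le
  have hN1 : 1 ≤ N := Nat.le_floor (by push_cast; linarith)
  have hq0 : 0 < q := by
    by_contra h
    push_neg at h
    interval_cases q
    have : (0:ℝ) < x ^ ((1:ℝ)/4) := Real.rpow_pos_of_pos hx0 _
    simp at hq1; linarith
  have hsqx : (4:ℝ) ≤ Real.sqrt x := by
    have : Real.sqrt 16 ≤ Real.sqrt x := Real.sqrt_le_sqrt hx
    rwa [show (16:ℝ) = 4^2 by norm_num, Real.sqrt_sq (by norm_num)] at this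
  -- covering finset
  set T : Finset ℕ := (Finset.Icc 1 N).biUnion
      (fun j => (Finset.Ioc 0 N).filter (fun n => ((1 + j * q) * q) ∣ n)) with hT
  have hsub : ({n : ℕ | 0 < n ∧ (n : ℝ) ≤ x ∧ Real.sqrt x < (Pplus n : ℝ) ∧
      q ∣ n ∧ q ∣ (Pplus n - 1)} : Set ℕ) ⊆ ↑T := by
    rintro n ⟨hn0, hnx, hpbig, hqn, hqp1⟩
    have hnN : n ≤ N := Nat.le_floor hnx
    set p := Pplus n with hp
    have hp4 : (4:ℝ) < (p:ℝ) := lt_of_le_of_lt hsqx hpbig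
    have hp5' : (4:ℕ) < p := by exact_mod_cast hp4
    have hn2 : 2 ≤ n := by
      by_contra h
      push_neg at h
      have : p ≤ 1 := by rw [hp, Pplus, if_pos (by omega)]; omega
      omega
    have hmem := Pplus_mem n hn2
    rw [← hp] at hmem
    obtain ⟨hpprime, hpn, -⟩ := Nat.mem_primeFactors.mp hmem
    have hqltp : q < p := by
      have : (q:ℝ) < (p:ℝ) := lt_of_le_of_lt hq2 hpbig
      exact_mod_cast this
    obtain ⟨j, hj⟩ := hqp1
    have hj' : p - 1 = j * q := by rw [mul_comm]; exact hj
    have hj1 : 1 ≤ j := by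
      rcases Nat.eq_zero_or_pos j with h | h
      · subst h; simp at hj'; omega
      · exact h
    have hpeq : p = 1 + j * q := by omega
    have hcop : Nat.Coprime p q := by
      rw [hpprime.coprime_iff_not_dvd]
      intro hdvd
      exact absurd (Nat.le_of_dvd hq0 hdvd) (not_le.mpr hqltp)
    have hpqn : p * q ∣ n := Nat.Coprime.mul_dvd_of_dvd_of_dvd hcop hpn hqn
    have hpn' : p ≤ n := Nat.le_of_dvd hn0 hpn
    have hjN : j ≤ N := by
      have h1 : j ≤ j * q := Nat.le_mul_of_pos_right j hq0
      have h2 : n ≤ N := hnN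
      omega
    simp only [hT, Finset.coe_biUnion, Set.mem_iUnion, Finset.mem_coe, Finset.mem_Icc,
      Finset.mem_filter, Finset.mem_Ioc]
    exact ⟨j, ⟨hj1, hjN⟩, ⟨hn0, hnN⟩, hpeq ▸ hpqn⟩
  -- count
  have hcard1 : ({n : ℕ | 0 < n ∧ (n : ℝ) ≤ x ∧ Real.sqrt x < (Pplus n : ℝ) ∧
      q ∣ n ∧ q ∣ (Pplus n - 1)} : Set ℕ).ncard ≤ T.card :=
    (Set.ncard_le_ncard hsub T.finite_toSet).trans_eq (Set.ncard_coe_finset T)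
  have hcard2 : T.card ≤ ∑ j ∈ Finset.Icc 1 N, N / ((1 + j * q) * q) := by
    refine (Finset.card_biUnion_le).trans (Finset.sum_le_sum fun j _ => ?_)
    rw [show ((Finset.Ioc 0 N).filter (fun n => ((1 + j * q) * q) ∣ n))
        = {m ∈ Finset.Ioc 0 N | ((1 + j * q) * q) ∣ m} from rfl,
      Nat.Ioc_filter_dvd_card_eq_div]
  -- real estimate
  have hstep : ((∑ j ∈ Finset.Icc 1 N, N / ((1 + j * q) * q) : ℕ) : ℝ)
      ≤ ∑ j ∈ Finset.Icc 1 N, x / (j * (q:ℝ)^2) := by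
    push_cast
    refine Finset.sum_le_sum fun j hj => ?_
    have hj1 : 1 ≤ j := (Finset.mem_Icc.mp hj).1
    have hd : (0:ℝ) < (j:ℝ) * (q:ℝ)^2 := by positivity
    calc ((N / ((1 + j * q) * q) : ℕ) : ℝ)
        ≤ (N:ℝ) / (((1 + j * q) * q : ℕ) : ℝ) := Nat.cast_div_le
      _ ≤ x / ((j:ℝ) * (q:ℝ)^2) := by
          apply div_le_div₀ (le_of_lt hx0) (hxN.trans (le_refl x)) hd
          have hj1' : (1:ℝ) ≤ (j:ℝ) := by exact_mod_cast hj1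
          have hq1' : (1:ℝ) ≤ (q:ℝ) := by exact_mod_cast hq0
          push_cast
          nlinarith
  have hharm : ∑ j ∈ Finset.Icc 1 N, x / (j * (q:ℝ)^2)
      ≤ 2 * x * Real.log x / (q:ℝ)^2 := by
    have hq2pos : (0:ℝ) < (q:ℝ)^2 := by positivity
    have hsum : ∑ j ∈ Finset.Icc 1 N, x / (j * (q:ℝ)^2)
        = (x / (q:ℝ)^2) * ∑ j ∈ Finset.Icc 1 N, ((j:ℝ))⁻¹ := by
      rw [Finset.mul_sum]
      refine Finset.sum_congr rfl fun j _ => ?_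
      field_simp
    have hH : ∑ j ∈ Finset.Icc 1 N, ((j:ℝ))⁻¹ ≤ 1 + Real.log N := by
      have := harmonic_le_one_add_log N
      rw [harmonic_eq_sum_Icc] at this
      push_cast at this
      exact this
    have hlogN : Real.log N ≤ Real.log x := Real.log_le_log (by positivity) hxN
    have hlog1 : 1 ≤ Real.log x := by
      rw [Real.le_log_iff_exp_le hx0]
      have := Real.exp_one_lt_d9
      linarith
    rw [hsum]
    have h2 : (1:ℝ) + Real.log N ≤ 2 * Real.log x := by linarith
    calc (x / (q:ℝ)^2) * ∑ j ∈ Finset.Icc 1 N, ((j:ℝ))⁻¹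
        ≤ (x / (q:ℝ)^2) * (2 * Real.log x) := by
          apply mul_le_mul_of_nonneg_left ((hH.trans h2)) (by positivity)
      _ = 2 * x * Real.log x / (q:ℝ)^2 := by ring
  calc (({n : ℕ | 0 < n ∧ (n : ℝ) ≤ x ∧ Real.sqrt x < (Pplus n : ℝ) ∧
          q ∣ n ∧ q ∣ (Pplus n - 1)} : Set ℕ).ncard : ℝ)
      ≤ ((∑ j ∈ Finset.Icc 1 N, N / ((1 + j * q) * q) : ℕ) : ℝ) := by
        exact_mod_cast hcard1.trans hcard2
    _ ≤ ∑ j ∈ Finset.Icc 1 N, x / (j * (q:ℝ)^2) := hstep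
    _ ≤ 2 * x * Real.log x / (q:ℝ)^2 := hharm
end

section
/- Let f : ℕ → [0,∞) be weakly super-multiplicative with normal order g, where g : (0,∞) → (0,∞) is strictly positive and non-decreasing. Then for every n ∈ ℕ and every ε > 0 there exists x₀ > 0 such that for all x > x₀ one has g(n(1+ε)x) ≥ (1 − 3ε)·f(n)·g(x). -/
/-- The upper density of a set of natural numbers:
`limsup_{N→∞} #{n ∈ S : n ≤ N} / N`. -/
noncomputable def upperDensity (S : Set ℕ) : ℝ :=
  Filter.limsup (fun N : ℕ => (({n | n ∈ S ∧ n ≤ N} : Set ℕ).ncard : ℝ) / N) Filter.atTop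

/-- `f` is weakly super-multiplicative: for every `n` and `ε > 0` there exist
`x₀ > 0` and `δ > 0` such that for all `x > x₀` the number of integers
`m ∈ [x, (1+ε)x]` with `f(nm) ≥ (1-ε) f(n) f(m)` is at least `δ x`. -/
def WeaklySuperMult (f : ℕ → ℝ) : Prop :=
  ∀ n : ℕ, 0 < n → ∀ ε : ℝ, 0 < ε → ∃ x₀ : ℝ, 0 < x₀ ∧ ∃ δ : ℝ, 0 < δ ∧
    ∀ x : ℝ, x₀ < x →
      δ * x ≤
        (({m : ℕ | (x ≤ (m : ℝ) ∧ (m : ℝ) ≤ (1 + ε) * x) ∧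
            (1 - ε) * f n * f m ≤ f (n * m)} : Set ℕ).ncard : ℝ)

/-- `f` has normal order `g`: for every `ε > 0` the set
`{n : |f(n) - g(n)| ≥ ε g(n)}` has upper density `0`. -/
def HasNormalOrder (f : ℕ → ℝ) (g : ℝ → ℝ) : Prop :=
  ∀ ε : ℝ, 0 < ε → upperDensity {n : ℕ | ε * g n ≤ |f n - g n|} = 0



lemma density_bound (S : Set ℕ) (h : upperDensity S = 0) {c : ℝ} (hc : 0 < c) :
    ∀ᶠ N : ℕ in Filter.atTop, (({k | k ∈ S ∧ k ≤ N} : Set ℕ).ncard : ℝ) ≤ c * N := by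
  have hcard : ∀ N : ℕ, ({k | k ∈ S ∧ k ≤ N} : Set ℕ).ncard ≤ N + 1 := by
    intro N
    calc ({k | k ∈ S ∧ k ≤ N} : Set ℕ).ncard ≤ (Set.Iic N).ncard :=
          Set.ncard_le_ncard (fun k hk => hk.2) (Set.finite_Iic N)
      _ = N + 1 := by simp [Set.ncard_eq_toFinset_card', Set.toFinset_Iic]
  have hbd : Filter.IsBoundedUnder (· ≤ ·) Filter.atTop
      (fun N : ℕ => (({n | n ∈ S ∧ n ≤ N} : Set ℕ).ncard : ℝ) / N) := by
    apply Filter.isBoundedUnder_of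
    refine ⟨2, fun N => ?_⟩
    rcases Nat.eq_zero_or_pos N with hN | hN
    · simp [hN]
    · have hN' : (0:ℝ) < N := by exact_mod_cast hN
      rw [div_le_iff₀ hN']
      have h1 : (({n | n ∈ S ∧ n ≤ N} : Set ℕ).ncard : ℝ) ≤ N + 1 := by
        exact_mod_cast hcard N
      have : (1:ℝ) ≤ N := by exact_mod_cast hN
      linarith
  rw [upperDensity] at h
  have hlt := Filter.eventually_lt_of_limsup_lt (h ▸ hc) hbd
  filter_upwards [hlt, Filter.eventually_gt_atTop 0] with N h1 h2
  have hN : (0:ℝ) < N := by exact_mod_cast h2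
  rw [div_lt_iff₀ hN] at h1
  exact le_of_lt h1


set_option maxHeartbeats 1000000 in
/-- Growth condition for monotone `g`: if `f : ℕ → [0,∞)` is weakly
super-multiplicative with strictly positive non-decreasing normal order `g`, then for
every `n` and `ε > 0` there is `x₀ > 0` such that for all `x > x₀` we have
`g(n(1+ε)x) ≥ (1-3ε) f(n) g(x)`. -/
theorem growth_condition_monotone
    (f : ℕ → ℝ) (g : ℝ → ℝ)
    (hf0 : ∀ n, 0 ≤ f n)
    (hwsm : WeaklySuperMult f)
    (hgpos : ∀ x : ℝ, 0 < x → 0 < g x)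
    (hgmono : ∀ x y : ℝ, 0 < x → x ≤ y → g x ≤ g y)
    (hno : HasNormalOrder f g) :
    ∀ n : ℕ, 0 < n → ∀ ε : ℝ, 0 < ε → ∃ x₀ : ℝ, 0 < x₀ ∧ ∀ x : ℝ, x₀ < x →
      (1 - 3 * ε) * f n * g x ≤ g ((n : ℝ) * (1 + ε) * x) := by
  intro n hn ε hε
  have hn1 : (1:ℝ) ≤ n := by exact_mod_cast hn
  by_cases htriv : (1 - 3 * ε) * f n ≤ 1
  · refine ⟨1, one_pos, fun x hx => ?_⟩
    have hx0 : (0:ℝ) < x := by linarith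
    have hxle : x ≤ (n : ℝ) * (1 + ε) * x := by
      nlinarith [mul_le_mul_of_nonneg_right (by nlinarith : (1:ℝ) ≤ (n:ℝ) * (1 + ε)) hx0.le]
    have h1 : g x ≤ g ((n : ℝ) * (1 + ε) * x) := hgmono x _ hx0 hxle
    have h2 : (1 - 3 * ε) * f n * g x ≤ 1 * g x :=
      mul_le_mul_of_nonneg_right htriv (hgpos x hx0).le
    linarith
  push_neg at htriv
  have hfn : 0 < f n := by nlinarith [hf0 n]
  have h3ε : 0 < 1 - 3 * ε := by nlinarith [hf0 n]
  have hε1 : ε < 1 := by linarith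
  -- bad set
  set B : Set ℕ := {k : ℕ | ε * g k ≤ |f k - g k|} with hBdef
  obtain ⟨y₀, hy₀, δ, hδ, hA⟩ := hwsm n hn ε hε
  set c : ℝ := δ / (2 * (1 + ε) * (n + 1)) with hcdef
  have hc : 0 < c := by
    apply div_pos hδ
    positivity
  obtain ⟨N₀, hN₀⟩ := (density_bound B (hno ε hε) hc).exists_forall_of_atTop
  refine ⟨max (max y₀ 1) (N₀ + 1), by positivity, fun x hx => ?_⟩
  have hxy : y₀ < x := lt_of_le_of_lt (le_max_of_le_left (le_max_left _ _)) hx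
  have hx1 : 1 < x := lt_of_le_of_lt (le_max_of_le_left (le_max_right _ _)) hx
  have hx0 : (0:ℝ) < x := by linarith
  have hxN : (N₀ : ℝ) < x := by
    have : (N₀ : ℝ) + 1 ≤ max (max y₀ 1) (N₀ + 1) := by
      exact_mod_cast le_max_of_le_right (le_refl ((N₀ : ℝ) + 1))
    linarith
  -- the set A
  set A : Set ℕ := {m : ℕ | (x ≤ (m : ℝ) ∧ (m : ℝ) ≤ (1 + ε) * x) ∧
      (1 - ε) * f n * f m ≤ f (n * m)} with hAdef
  have hAcard : δ * x ≤ (A.ncard : ℝ) := hA x hxy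
  set N₁ : ℕ := ⌊(1 + ε) * x⌋₊ with hN₁def
  set N₂ : ℕ := ⌊(n : ℝ) * ((1 + ε) * x)⌋₊ with hN₂def
  have hN₁ge : N₀ ≤ N₁ := Nat.le_floor (by nlinarith)
  have hN₂ge : N₀ ≤ N₂ := Nat.le_floor (by
    nlinarith [mul_le_mul_of_nonneg_right (by nlinarith : (1:ℝ) ≤ (n:ℝ) * (1 + ε)) hx0.le])
  have hmemN₁ : ∀ m ∈ A, m ≤ N₁ := fun m hm => Nat.le_floor hm.1.2
  -- there is a good element of A
  have hex : ∃ m ∈ A, m ∉ B ∧ n * m ∉ B := by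
    by_contra hcon
    push_neg at hcon
    have hAsub : A ⊆ (A ∩ B) ∪ (A ∩ {m : ℕ | n * m ∈ B}) := by
      intro m hm
      rcases Classical.em (m ∈ B) with h | h
      · exact Or.inl ⟨hm, h⟩
      · exact Or.inr ⟨hm, hcon m hm h⟩
    have hfin1 : ({k | k ∈ B ∧ k ≤ N₁} : Set ℕ).Finite :=
      (Set.finite_Iic N₁).subset fun k hk => hk.2
    have hfin2 : ({k | k ∈ B ∧ k ≤ N₂} : Set ℕ).Finite :=
      (Set.finite_Iic N₂).subset fun k hk => hk.2
    have hc1 : (A ∩ B).ncard ≤ ({k | k ∈ B ∧ k ≤ N₁} : Set ℕ).ncard :=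
      Set.ncard_le_ncard (fun m hm => ⟨hm.2, hmemN₁ m hm.1⟩) hfin1
    have hc2 : (A ∩ {m : ℕ | n * m ∈ B}).ncard ≤ ({k | k ∈ B ∧ k ≤ N₂} : Set ℕ).ncard := by
      have hinj : Function.Injective (fun m : ℕ => n * m) :=
        fun a b hab => Nat.eq_of_mul_eq_mul_left hn hab
      rw [← Set.ncard_image_of_injective (A ∩ {m : ℕ | n * m ∈ B}) hinj]
      apply Set.ncard_le_ncard _ hfin2
      rintro k ⟨m, ⟨hmA, hmB⟩, rfl⟩
      refine ⟨hmB, Nat.le_floor ?_⟩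
      push_cast
      have := hmA.1.2
      nlinarith [hmA.1.1]
    have hAfin : A.Finite := (Set.finite_Iic N₁).subset fun m hm => hmemN₁ m hm
    have hsum : (A.ncard : ℝ) ≤ (({k | k ∈ B ∧ k ≤ N₁} : Set ℕ).ncard : ℝ)
        + (({k | k ∈ B ∧ k ≤ N₂} : Set ℕ).ncard : ℝ) := by
      have := Set.ncard_union_le (A ∩ B) (A ∩ {m : ℕ | n * m ∈ B})
      have h0 := Set.ncard_le_ncard hAsub ((hAfin.inter_of_left B).union (hAfin.inter_of_left _))
      have : A.ncard ≤ ({k | k ∈ B ∧ k ≤ N₁} : Set ℕ).ncard + ({k | k ∈ B ∧ k ≤ N₂} : Set ℕ).ncard := by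
        omega
      exact_mod_cast this
    have hb1 : (({k | k ∈ B ∧ k ≤ N₁} : Set ℕ).ncard : ℝ) ≤ c * N₁ := hN₀ N₁ hN₁ge
    have hb2 : (({k | k ∈ B ∧ k ≤ N₂} : Set ℕ).ncard : ℝ) ≤ c * N₂ := hN₀ N₂ hN₂ge
    have hN₁le : (N₁ : ℝ) ≤ (1 + ε) * x := Nat.floor_le (by positivity)
    have hN₂le : (N₂ : ℝ) ≤ (n : ℝ) * ((1 + ε) * x) := Nat.floor_le (by positivity)
    have hcsum : c * ((1 + ε) * x) + c * ((n : ℝ) * ((1 + ε) * x)) = δ * x / 2 := by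
      rw [hcdef]
      field_simp
      ring
    nlinarith
  obtain ⟨m, ⟨⟨hmx, hmup⟩, hmmul⟩, hmB, hnmB⟩ := hex
  have hm0 : (0:ℝ) < m := by linarith
  have hnm0 : (0:ℝ) < (n : ℝ) * m := by positivity
  have hgm : 0 < g m := hgpos _ hm0
  have hgx : 0 < g x := hgpos _ hx0
  have hgmx : g x ≤ g m := hgmono x m hx0 hmx
  have hgnm : 0 < g ((n * m : ℕ) : ℝ) := hgpos _ (by push_cast; positivity)
  have hgle : g ((n * m : ℕ) : ℝ) ≤ g ((n : ℝ) * (1 + ε) * x) := by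
    apply hgmono _ _ (by push_cast; positivity)
    push_cast
    nlinarith [mul_le_mul_of_nonneg_left hmup (by positivity : (0:ℝ) ≤ (n:ℝ))]
  -- from m ∉ B
  have h1 : |f m - g m| < ε * g m := not_le.mp hmB
  have h2 : |f (n * m) - g ((n * m : ℕ) : ℝ)| < ε * g ((n * m : ℕ) : ℝ) := not_le.mp hnmB
  rw [abs_lt] at h1 h2
  have hfm : (1 - ε) * g m < f m := by linarith [h1.1]
  have hfnm : f (n * m) < (1 + ε) * g ((n * m : ℕ) : ℝ) := by linarith [h2.2]
  -- chain
  have hnneg : (0:ℝ) ≤ (1 - ε) * f n := by nlinarith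
  have s1 : (1 - ε) * f n * ((1 - ε) * g m) ≤ (1 - ε) * f n * f m :=
    mul_le_mul_of_nonneg_left hfm.le hnneg
  have s2 : (1 - ε) * f n * ((1 - ε) * g x) ≤ (1 - ε) * f n * ((1 - ε) * g m) :=
    mul_le_mul_of_nonneg_left (mul_le_mul_of_nonneg_left hgmx (by linarith)) hnneg
  have s3 : (1 - 3 * ε) * (1 + ε) * (f n * g x) ≤ (1 - ε) * (1 - ε) * (f n * g x) :=
    mul_le_mul_of_nonneg_right (by nlinarith) (by positivity)
  have s4 : (1 + ε) * g ((n * m : ℕ) : ℝ) ≤ (1 + ε) * g ((n : ℝ) * (1 + ε) * x) :=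
    mul_le_mul_of_nonneg_left hgle (by linarith)
  have s5 : (1 + ε) * ((1 - 3 * ε) * f n * g x) ≤ (1 + ε) * g ((n : ℝ) * (1 + ε) * x) := by
    nlinarith [s1, s2, s3, s4, hmmul, hfnm]
  exact le_of_mul_le_mul_left s5 (by linarith)
end

section
/- Let f : ℕ → [0,∞) be weakly super-multiplicative with normal order g, where g : (0,∞) → (0,∞) is strictly positive and log-uniformly continuous. Then for every n ∈ ℕ and every ε > 0 there exist a real number γ with 0 < γ ≤ ε and some x₀ > 0 such that for all x > x₀ one has g(n(1+γ)x) ≥ (1 − 5ε)·f(n)·g(x). -/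
/-- `g` is log-uniformly continuous: for every `ε > 0` there is `δ > 0` such that
`|x/y - 1| < δ` implies `|g(x)/g(y) - 1| < ε` for positive `x, y`. -/
def LogUniformlyContinuous (g : ℝ → ℝ) : Prop :=
  ∀ ε : ℝ, 0 < ε → ∃ δ : ℝ, 0 < δ ∧ ∀ x y : ℝ, 0 < x → 0 < y →
    |x / y - 1| < δ → |g x / g y - 1| < ε

open Filter
set_option maxHeartbeats 1000000

lemma countSet_finite (S : Set ℕ) (N : ℕ) : ({n | n ∈ S ∧ n ≤ N} : Set ℕ).Finite :=
  (Set.finite_Iic N).subset fun n hn => hn.2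

lemma countSet_le (S : Set ℕ) (N : ℕ) : ({n | n ∈ S ∧ n ≤ N} : Set ℕ).ncard ≤ N + 1 := by
  calc ({n | n ∈ S ∧ n ≤ N} : Set ℕ).ncard ≤ (Set.Iic N).ncard :=
        Set.ncard_le_ncard (fun n hn => hn.2) (Set.finite_Iic N)
    _ = N + 1 := by
        rw [← Finset.coe_Iic, Set.ncard_coe_finset, Nat.card_Iic]

lemma count_bound (S : Set ℕ) (h : upperDensity S = 0) {c : ℝ} (hc : 0 < c) :
    ∃ N₀ : ℕ, ∀ N : ℕ, N₀ ≤ N → (({n | n ∈ S ∧ n ≤ N} : Set ℕ).ncard : ℝ) ≤ c * N := by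
  have hb : IsBoundedUnder (· ≤ ·) atTop
      (fun N : ℕ => (({n | n ∈ S ∧ n ≤ N} : Set ℕ).ncard : ℝ) / N) := by
    refine Filter.isBoundedUnder_of ⟨2, fun N => ?_⟩
    rcases Nat.eq_zero_or_pos N with h0 | h0
    · subst h0; simp
    · have hN : (0:ℝ) < N := by exact_mod_cast h0
      rw [div_le_iff₀ hN]
      have h1 : (({n | n ∈ S ∧ n ≤ N} : Set ℕ).ncard : ℝ) ≤ N + 1 := by
        exact_mod_cast countSet_le S N
      have : (1:ℝ) ≤ N := by exact_mod_cast h0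
      linarith
  have hev : ∀ᶠ N : ℕ in atTop,
      (({n | n ∈ S ∧ n ≤ N} : Set ℕ).ncard : ℝ) / N < c := by
    apply Filter.eventually_lt_of_limsup_lt _ hb
    rw [show Filter.limsup (fun N : ℕ => (({n | n ∈ S ∧ n ≤ N} : Set ℕ).ncard : ℝ) / N)
        Filter.atTop = upperDensity S from rfl, h]
    exact hc
  obtain ⟨N₀, hN₀⟩ := Filter.eventually_atTop.mp (hev.and (eventually_ge_atTop 1))
  refine ⟨max N₀ 1, fun N hN => ?_⟩
  obtain ⟨h1, h2⟩ := hN₀ N (le_trans (le_max_left _ _) hN)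
  have hNpos : (0:ℝ) < N := by exact_mod_cast h2
  have := (div_lt_iff₀ hNpos).mp h1
  linarith

lemma count_pullback (S : Set ℕ) (n N : ℕ) (hn : 0 < n) :
    ({m | n * m ∈ S ∧ m ≤ N} : Set ℕ).ncard ≤ ({k | k ∈ S ∧ k ≤ n * N} : Set ℕ).ncard := by
  exact Set.ncard_le_ncard_of_injOn (fun m => n * m)
    (fun m hm => ⟨hm.1, Nat.mul_le_mul_left n hm.2⟩)
    (fun a _ b _ hab => Nat.eq_of_mul_eq_mul_left hn hab)
    (countSet_finite S (n * N))


lemma final_arith (ε ε₂ fn fm fnm gm gnm gx gb : ℝ)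
    (hε : 0 < ε) (h15 : 0 < 1 - 5 * ε) (hε₂ε : ε₂ ≤ ε) (hε₂ : 0 < ε₂)
    (hfn : 0 < fn) (hfm0 : 0 ≤ fm) (hgx : 0 < gx) (hgm : 0 < gm)
    (hgnm : 0 < gnm) (hgb : 0 < gb)
    (hf1 : (1 - ε₂) * fn * fm ≤ fnm)
    (hm1 : -(ε * gm) < fm - gm)
    (hnm2 : fnm - gnm < ε * gnm)
    (hgmlb : (1 - ε) * gx ≤ gm)
    (hgnmub : gnm < (1 + ε) * gb) :
    (1 - 5 * ε) * fn * gx ≤ gb := by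
  have h1ε : 0 < 1 - ε := by linarith
  have s1 : fnm < (1 + ε) ^ 2 * gb := by nlinarith
  have s2 : (1 - ε) * fn * fm ≤ fnm := by
    nlinarith [mul_nonneg (by linarith : (0:ℝ) ≤ ε - ε₂) (mul_nonneg hfn.le hfm0)]
  have t2 : (1 - ε) * gm ≤ fm := by linarith
  have t3 : (1 - ε) ^ 2 * gx ≤ fm := by nlinarith
  have t4 : (1 - ε) ^ 3 * (fn * gx) ≤ (1 + ε) ^ 2 * gb := by
    have h1 : (1 - ε) ^ 2 * (fn * gx) ≤ fn * fm := by nlinarith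
    nlinarith
  nlinarith [sq_nonneg ε, mul_pos hfn hgx, mul_nonneg (mul_nonneg hε.le hε.le)
    (mul_pos hfn hgx).le, mul_nonneg hε.le (mul_pos hfn hgx).le]



/-- Growth condition for log-uniformly continuous `g`: if `f : ℕ → [0,∞)` is weakly
super-multiplicative with strictly positive log-uniformly continuous normal order `g`, then for every `n` and
`ε > 0` there are `γ` with `0 < γ ≤ ε` and `x₀ > 0` such that for all `x > x₀` we have
`g(n(1+γ)x) ≥ (1-5ε) f(n) g(x)`. -/
theorem growth_condition_logUC
    (f : ℕ → ℝ) (g : ℝ → ℝ)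
    (hf0 : ∀ n, 0 ≤ f n)
    (hwsm : WeaklySuperMult f)
    (hgpos : ∀ x : ℝ, 0 < x → 0 < g x)
    (hgluc : LogUniformlyContinuous g)
    (hno : HasNormalOrder f g) :
    ∀ n : ℕ, 0 < n → ∀ ε : ℝ, 0 < ε → ∃ γ : ℝ, 0 < γ ∧ γ ≤ ε ∧
      ∃ x₀ : ℝ, 0 < x₀ ∧ ∀ x : ℝ, x₀ < x →
        (1 - 5 * ε) * f n * g x ≤ g ((n : ℝ) * (1 + γ) * x) := by
  intro n hn ε hε
  by_cases htriv : (1 - 5 * ε) * f n ≤ 0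
  · -- trivial case: RHS is nonpositive
    refine ⟨ε, hε, le_refl ε, 1, one_pos, fun x hx => ?_⟩
    have hx0 : (0:ℝ) < x := lt_trans one_pos hx
    have hnR : (0:ℝ) < n := by exact_mod_cast hn
    have harg : 0 < (n : ℝ) * (1 + ε) * x := by positivity
    have hgb := hgpos _ harg
    have hgx := hgpos x hx0
    have : (1 - 5 * ε) * f n * g x ≤ 0 :=
      mul_nonpos_of_nonpos_of_nonneg htriv hgx.le
    linarith
  push_neg at htriv
  -- main case
  have hfn : 0 < f n := by
    rcases (hf0 n).lt_or_eq with h | h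
    · exact h
    · exfalso; rw [← h] at htriv; simp at htriv
  have h15 : 0 < 1 - 5 * ε := by
    by_contra h
    push_neg at h
    nlinarith
  have h1ε : 0 < 1 - ε := by linarith
  obtain ⟨δg, hδgpos, hg⟩ := hgluc ε hε
  set ε₂ : ℝ := min ε (δg / 2) with hε₂def
  have hε₂ : 0 < ε₂ := lt_min hε (by linarith)
  have hε₂ε : ε₂ ≤ ε := min_le_left _ _
  have hε₂δ : ε₂ ≤ δg / 2 := min_le_right _ _
  obtain ⟨x₁, hx₁pos, δ, hδ, hwsm'⟩ := hwsm n hn ε₂ hε₂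
  have hE := hno ε hε
  have hc₁ : (0:ℝ) < δ / (4 * (1 + ε₂)) := by positivity
  have hnR : (0:ℝ) < n := by exact_mod_cast hn
  have hc₂ : (0:ℝ) < δ / (4 * (1 + ε₂) * n) := by positivity
  obtain ⟨N₀, hN₀⟩ := count_bound _ hE hc₁
  obtain ⟨N₁, hN₁⟩ := count_bound _ hE hc₂
  set E : Set ℕ := {k : ℕ | ε * g k ≤ |f k - g k|} with hEdef
  refine ⟨ε₂, hε₂, hε₂ε, max (max x₁ 1) ((max N₀ N₁ : ℕ) : ℝ),
    lt_of_lt_of_le one_pos (le_trans (le_max_right x₁ 1) (le_max_left _ _)), fun x hx => ?_⟩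
  have hxx₁ : x₁ < x := lt_of_le_of_lt (le_trans (le_max_left x₁ 1) (le_max_left _ _)) hx
  have hx1 : 1 < x := lt_of_le_of_lt (le_trans (le_max_right x₁ 1) (le_max_left _ _)) hx
  have hx0 : (0:ℝ) < x := lt_trans one_pos hx1
  have hxN : ((max N₀ N₁ : ℕ) : ℝ) < x := lt_of_le_of_lt (le_max_right _ _) hx
  set N : ℕ := ⌊(1 + ε₂) * x⌋₊ with hNdef
  have hxle : x ≤ (1 + ε₂) * x := by nlinarith
  have hNx : (N : ℝ) ≤ (1 + ε₂) * x := Nat.floor_le (by positivity)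
  have hN₀N : N₀ ≤ N := by
    apply Nat.le_floor
    calc (N₀ : ℝ) ≤ ((max N₀ N₁ : ℕ) : ℝ) := by exact_mod_cast le_max_left N₀ N₁
      _ ≤ x := hxN.le
      _ ≤ (1 + ε₂) * x := hxle
  have hN₁N : N₁ ≤ N := by
    apply Nat.le_floor
    calc (N₁ : ℝ) ≤ ((max N₀ N₁ : ℕ) : ℝ) := by exact_mod_cast le_max_right N₀ N₁
      _ ≤ x := hxN.le
      _ ≤ (1 + ε₂) * x := hxle
  set Sx : Set ℕ := {m : ℕ | (x ≤ (m : ℝ) ∧ (m : ℝ) ≤ (1 + ε₂) * x) ∧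
      (1 - ε₂) * f n * f m ≤ f (n * m)} with hSxdef
  have hSxcard : δ * x ≤ (Sx.ncard : ℝ) := hwsm' x hxx₁
  have hSxsub : ∀ m ∈ Sx, m ≤ N := fun m hm => Nat.le_floor hm.1.2
  -- find good m
  obtain ⟨m, hmS, hmE, hnmE⟩ : ∃ m : ℕ, m ∈ Sx ∧ m ∉ E ∧ n * m ∉ E := by
    by_contra hcon
    push_neg at hcon
    have hsub : Sx ⊆ {k | k ∈ E ∧ k ≤ N} ∪ {m | n * m ∈ E ∧ m ≤ N} := by
      intro m hm
      by_cases hmE : m ∈ E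
      · exact Or.inl ⟨hmE, hSxsub m hm⟩
      · exact Or.inr ⟨hcon m hm hmE, hSxsub m hm⟩
    have hfin1 := countSet_finite E N
    have hfin2 : ({m | n * m ∈ E ∧ m ≤ N} : Set ℕ).Finite :=
      (Set.finite_Iic N).subset fun m hm => hm.2
    have hcard1 : (Sx.ncard : ℝ) ≤
        (({k | k ∈ E ∧ k ≤ N} : Set ℕ).ncard : ℝ) + (({m | n * m ∈ E ∧ m ≤ N} : Set ℕ).ncard : ℝ) := by
      have h1 : Sx.ncard ≤ ({k | k ∈ E ∧ k ≤ N} ∪ {m | n * m ∈ E ∧ m ≤ N} : Set ℕ).ncard :=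
        Set.ncard_le_ncard hsub (hfin1.union hfin2)
      have h2 := Set.ncard_union_le ({k | k ∈ E ∧ k ≤ N} : Set ℕ) {m | n * m ∈ E ∧ m ≤ N}
      exact_mod_cast le_trans h1 h2
    have hA : (({k | k ∈ E ∧ k ≤ N} : Set ℕ).ncard : ℝ) ≤ δ / (4 * (1 + ε₂)) * N := hN₀ N hN₀N
    have hB : (({m | n * m ∈ E ∧ m ≤ N} : Set ℕ).ncard : ℝ) ≤ δ / (4 * (1 + ε₂)) * N := by
      have h1 : (({m | n * m ∈ E ∧ m ≤ N} : Set ℕ).ncard : ℝ) ≤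
          (({k | k ∈ E ∧ k ≤ n * N} : Set ℕ).ncard : ℝ) := by
        exact_mod_cast count_pullback E n N hn
      have h2 : (({k | k ∈ E ∧ k ≤ n * N} : Set ℕ).ncard : ℝ) ≤
          δ / (4 * (1 + ε₂) * n) * (n * N) := by
        have := hN₁ (n * N) (le_trans hN₁N (Nat.le_mul_of_pos_left N hn))
        exact_mod_cast this
      have h3 : δ / (4 * (1 + ε₂) * n) * ((n : ℝ) * N) = δ / (4 * (1 + ε₂)) * N := by
        field_simp
      rw [h3] at h2
      calc _ ≤ _ := h1
        _ ≤ _ := h2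
    have hNx' : δ / (4 * (1 + ε₂)) * N + δ / (4 * (1 + ε₂)) * N ≤ δ / 2 * x := by
      have : δ / (4 * (1 + ε₂)) * ((1 + ε₂) * x) = δ / 4 * x := by
        field_simp
      nlinarith [mul_le_mul_of_nonneg_left hNx hc₁.le]
    nlinarith [mul_pos hδ hx0]
  -- unpack m
  obtain ⟨⟨hm_lb, hm_ub⟩, hf1⟩ := hmS
  have hmR : (0:ℝ) < m := lt_of_lt_of_le hx0 hm_lb
  have hmpos : 0 < m := by exact_mod_cast hmR
  have hbpos : (0:ℝ) < (n : ℝ) * (1 + ε₂) * x := by positivity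
  have hgb := hgpos _ hbpos
  have hgx := hgpos x hx0
  have hgm := hgpos m hmR
  have hnmR : (0:ℝ) < ((n * m : ℕ) : ℝ) := by
    have : 0 < n * m := Nat.mul_pos hn hmpos
    exact_mod_cast this
  have hgnm := hgpos _ hnmR
  -- from m ∉ E, n*m ∉ E
  rw [hEdef, Set.mem_setOf_eq, not_le] at hmE hnmE
  obtain ⟨hmE1, hmE2⟩ := abs_lt.mp hmE
  obtain ⟨hnmE1, hnmE2⟩ := abs_lt.mp hnmE
  -- LUC for m vs x
  have habs1 : |(m : ℝ) / x - 1| < δg := by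
    rw [abs_lt]
    constructor
    · have : (1:ℝ) ≤ (m : ℝ) / x := (one_le_div hx0).mpr hm_lb
      linarith
    · have : (m : ℝ) / x ≤ 1 + ε₂ := (div_le_iff₀ hx0).mpr (by linarith)
      linarith
  have hgm_lb : (1 - ε) * g x ≤ g m := by
    have h := hg m x hmR hx0 habs1
    have h2 := (abs_lt.mp h).1
    have : 1 - ε < g m / g x := by linarith
    have := (lt_div_iff₀ hgx).mp this
    linarith
  -- LUC for n*m vs n*(1+ε₂)*x
  have habs2 : |((n * m : ℕ) : ℝ) / ((n : ℝ) * (1 + ε₂) * x) - 1| < δg := by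
    have hcast : ((n * m : ℕ) : ℝ) = (n : ℝ) * m := by push_cast; ring
    rw [hcast, abs_lt]
    have hub : (n : ℝ) * m / ((n : ℝ) * (1 + ε₂) * x) ≤ 1 := by
      rw [div_le_one hbpos]
      have := mul_le_mul_of_nonneg_left hm_ub hnR.le
      linarith
    have hlb : 1 - ε₂ ≤ (n : ℝ) * m / ((n : ℝ) * (1 + ε₂) * x) := by
      rw [le_div_iff₀ hbpos]
      have h1 : (n : ℝ) * x ≤ (n : ℝ) * m := mul_le_mul_of_nonneg_left hm_lb hnR.le
      nlinarith [mul_pos hnR hx0, sq_nonneg ε₂]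
    constructor
    · linarith
    · linarith
  have hgnm_ub : g ((n * m : ℕ) : ℝ) < (1 + ε) * g ((n : ℝ) * (1 + ε₂) * x) := by
    have h := hg _ _ hnmR hbpos habs2
    have h2 := (abs_lt.mp h).2
    have : g ((n * m : ℕ) : ℝ) / g ((n : ℝ) * (1 + ε₂) * x) < 1 + ε := by linarith
    have := (div_lt_iff₀ hgb).mp this
    linarith
  -- chain of inequalities
  set b : ℝ := (n : ℝ) * (1 + ε₂) * x with hbdef
  exact final_arith ε ε₂ (f n) (f m) (f (n * m)) (g m) (g ((n * m : ℕ) : ℝ)) (g x) (g b)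
    hε h15 hε₂ε hε₂ hfn (hf0 m) hgx hgm hgnm hgb hf1 hmE1 hnmE2 hgm_lb hgnm_ub
end
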